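/- Let X be a separable Banach space and V : ℝⁿ → 𝓛(X) be such that x ↦ V(x)e is (a.e. with respect to Lebesgue measure equal to a) strongly measurable function for every e ∈ X, and such that V(x) is invertible for a.e. x ∈ ℝⁿ, i.e. there is W : ℝⁿ → 𝓛(X) with V(x)∘W(x) = W(x)∘V(x) = id_X for a.e. x. Then for every e ∈ X the function x ↦ W(x)e is a.e. equal to a strongly measurable function (i.e. it is almost-everywhere strongly measurable with respect to Lebesgue measure on ℝⁿ). -/
import Mathlib


open MeasureTheory

/-- Let `X` be a separable Banach space and `V : ℝⁿ → 𝓛(X)` be such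
that `x ↦ V x e` is a.e. strongly measurable for every `e`, and such that `V x` is
invertible for a.e. `x` (witnessed by `W` with `V x ∘ W x = W x ∘ V x = id` a.e.).
Then `x ↦ W x e` is a.e. strongly measurable for every `e ∈ X`. -/
theorem statement3 {n : ℕ} {X : Type*} [NormedAddCommGroup X] [NormedSpace ℝ X]
    [CompleteSpace X] [TopologicalSpace.SeparableSpace X]
    (V W : (Fin n → ℝ) → X →L[ℝ] X)
    (hV : ∀ e : X, AEStronglyMeasurable (fun x => V x e) (volume : Measure (Fin n → ℝ)))
    (hinv : ∀ᵐ x ∂(volume : Measure (Fin n → ℝ)),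
      (V x).comp (W x) = ContinuousLinearMap.id ℝ X ∧
        (W x).comp (V x) = ContinuousLinearMap.id ℝ X) :
    ∀ e : X, AEStronglyMeasurable (fun x => W x e) (volume : Measure (Fin n → ℝ)) := by
  classical
  haveI : Nonempty X := ⟨0⟩
  haveI : SecondCountableTopology X :=
    UniformSpace.secondCountable_of_separable X
  borelize X
  set μ : Measure (Fin n → ℝ) := volume
  -- dense sequence
  set d : ℕ → X := TopologicalSpace.denseSeq X with hd
  have hdense : DenseRange d := TopologicalSpace.denseRange_denseSeq X
  -- strongly measurable versions for each d k
  choose g hg hge using fun k => hV (d k)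
  -- combine all a.e. statements into one null bad set
  have hae : ∀ᵐ x ∂μ, (∀ k, V x (d k) = g k x) ∧
      ((V x).comp (W x) = ContinuousLinearMap.id ℝ X ∧
        (W x).comp (V x) = ContinuousLinearMap.id ℝ X) := by
    refine Filter.Eventually.and ?_ hinv
    rw [MeasureTheory.ae_all_iff]
    exact fun k => hge k
  obtain ⟨T, hTsub, hTmeas, hTnull⟩ :=
    MeasureTheory.exists_measurable_superset_of_null (MeasureTheory.ae_iff.1 hae)
  have hgood : ∀ x ∉ T, (∀ k, V x (d k) = g k x) ∧
      ((V x).comp (W x) = ContinuousLinearMap.id ℝ X ∧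
        (W x).comp (V x) = ContinuousLinearMap.id ℝ X) := by
    intro x hx
    by_contra h
    exact hx (hTsub h)
  -- modified operator family
  set Vt : (Fin n → ℝ) → X →L[ℝ] X := fun x => if x ∈ T then 0 else V x with hVt
  -- each `fun x => Vt x e` is strongly measurable
  have hVtmeas : ∀ e : X, StronglyMeasurable (fun x => Vt x e) := by
    intro e
    -- choose a sequence in the range of d tending to e
    obtain ⟨y, hy_mem, hy_tend⟩ := mem_closure_iff_seq_limit.1 (hdense e)
    choose ψ hψ using hy_mem
    have key : ∀ x, Filter.Tendsto (fun m => if x ∈ T then (0 : X) else g (ψ m) x)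
        Filter.atTop (nhds (Vt x e)) := by
      intro x
      by_cases hx : x ∈ T
      · simp only [if_pos hx]
        have h0 : Vt x e = 0 := by simp [hVt, hx]
        rw [h0]
        exact tendsto_const_nhds
      · simp only [if_neg hx]
        have hVte : Vt x e = V x e := by simp [hVt, hx]
        rw [hVte]
        have h1 : ∀ m, g (ψ m) x = V x (y m) := fun m => by
          rw [← hψ m]; exact ((hgood x hx).1 (ψ m)).symm
        rw [show (fun m => g (ψ m) x) = fun m => V x (y m) from funext h1]
        exact ((V x).continuous.tendsto e).comp hy_tend
    exact stronglyMeasurable_of_tendsto _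
      (fun m => StronglyMeasurable.ite hTmeas stronglyMeasurable_const (hg (ψ m)))
      (by rw [tendsto_pi_nhds]; exact key)
  -- joint strong measurability
  have hjoint : StronglyMeasurable (Function.uncurry fun (e : X) (x : Fin n → ℝ) => Vt x e) :=
    stronglyMeasurable_uncurry_of_continuous_of_stronglyMeasurable
      (fun x => (Vt x).continuous) hVtmeas
  have hjm : Measurable fun p : (Fin n → ℝ) × X => Vt p.1 p.2 := by
    have := hjoint.measurable
    exact this.comp measurable_swap
  -- now fix e and show measurability of the modified inverse
  intro e
  set f : (Fin n → ℝ) → X := fun x => if x ∈ T then 0 else W x e with hf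
  have hfe : f =ᵐ[μ] fun x => W x e := by
    refine MeasureTheory.measure_mono_null ?_ hTnull
    intro x hx
    simp only [Set.mem_setOf_eq] at hx
    by_contra hxT
    exact hx (by simp [hf, hxT])
  -- graph of f
  set S : Set ((Fin n → ℝ) × X) :=
    (T ×ˢ ({0} : Set X)) ∪ ((Tᶜ ×ˢ (Set.univ : Set X)) ∩ {p | Vt p.1 p.2 = e}) with hS
  have hSmeas : MeasurableSet S := by
    refine (hTmeas.prod (measurableSet_singleton 0)).union
      ((hTmeas.compl.prod MeasurableSet.univ).inter ?_)
    exact hjm (measurableSet_singleton e)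
  have hfiber : ∀ p : (Fin n → ℝ) × X, p ∈ S ↔ p.2 = f p.1 := by
    rintro ⟨x, y⟩
    by_cases hx : x ∈ T
    · constructor
      · rintro (h1 | h2)
        · simp only [hf, if_pos hx]
          simpa using h1.2
        · exact absurd h2.1.1 (by simpa using hx)
      · intro hy
        refine Or.inl ⟨hx, ?_⟩
        simp only [hf, if_pos hx] at hy
        simpa using hy
    · have h := hgood x hx
      have h1 := congrFun (congrArg DFunLike.coe h.2.1) e
      have h2 := fun z => congrFun (congrArg DFunLike.coe h.2.2) z
      simp only [ContinuousLinearMap.coe_comp', Function.comp_apply,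
        ContinuousLinearMap.coe_id', id_eq] at h1 h2
      have hmem : (x, y) ∈ S ↔ V x y = e := by
        simp only [hS, Set.mem_union, Set.mem_prod, Set.mem_singleton_iff, Set.mem_inter_iff,
          Set.mem_compl_iff, Set.mem_setOf_eq, Set.mem_univ, and_true, hx, not_false_iff,
          true_and, hVt, if_neg hx]
        constructor
        · rintro (⟨hxT, _⟩ | hy)
          · exact hxT.elim
          · exact hy
        · exact Or.inr
      rw [hmem]
      simp only [hf, if_neg hx]
      constructor
      · intro hy
        rw [← hy]
        exact (h2 y).symm
      · rintro rfl
        exact h1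
  have hInj : Set.InjOn Prod.fst S := by
    rintro ⟨x, y⟩ hy ⟨x', y'⟩ hy' (hxx : x = x')
    subst hxx
    have h1 := (hfiber _).1 hy
    have h2 := (hfiber _).1 hy'
    simp only at h1 h2
    simp [Prod.ext_iff, h1, h2]
  have hfmeas : Measurable f := by
    intro U hU
    have : f ⁻¹' U = Prod.fst '' (S ∩ (Set.univ ×ˢ U)) := by
      ext x
      simp only [Set.mem_preimage, Set.mem_image, Set.mem_inter_iff, Set.mem_prod,
        Set.mem_univ, true_and]
      constructor
      · intro hx
        exact ⟨(x, f x), ⟨(hfiber (x, f x)).2 rfl, hx⟩, rfl⟩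
      · rintro ⟨⟨x', y⟩, ⟨hyS, hyU⟩, rfl⟩
        have := (hfiber _).1 hyS
        simp only at this
        rwa [← this]
    rw [this]
    exact (hSmeas.inter (MeasurableSet.univ.prod hU)).image_of_measurable_injOn
      measurable_fst (hInj.mono Set.inter_subset_left)
  exact (hfmeas.stronglyMeasurable.aestronglyMeasurable).congr hfe
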